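/- arXiv:1705.04953 — 2 statements merged into one kernel-verified Lean document; each statement's English description precedes it below -/
import Mathlib

section
/- Let γ > 0, let A ∈ ℝ^{n×n}, B ∈ ℝ^{n×m}, C ∈ ℝ^{r×n}, D ∈ ℝ^{r×m}, and let P be a symmetric n×n real matrix such that the symmetric block matrix M(P) = [[AᵀP + PA, PB, Cᵀ],[BᵀP, −γI, Dᵀ],[C, D, −γI]] is negative definite. Then for all x ∈ ℝⁿ and w ∈ ℝᵐ with (x, w) ≠ (0, 0), one has 2·xᵀP(Ax + Bw) + γ⁻¹·‖Cx + Dw‖² − γ·‖w‖² < 0, where ‖·‖ is the Euclidean norm. -/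
open Matrix

/-- A real matrix is negative definite (in the quadratic-form sense):
`yᵀ M y < 0` for all nonzero real vectors `y`. -/
def Matrix.NegDefR {ι : Type*} [Fintype ι] (M : Matrix ι ι ℝ) : Prop :=
  ∀ y : ι → ℝ, y ≠ 0 → y ⬝ᵥ M *ᵥ y < 0

lemma helper_dot_transpose {k l : Type*} [Fintype k] [Fintype l] (M : Matrix k l ℝ) (a : l → ℝ) (b : k → ℝ) :
    a ⬝ᵥ Mᵀ *ᵥ b = b ⬝ᵥ M *ᵥ a := by
  rw [Matrix.dotProduct_mulVec, Matrix.vecMul_transpose, dotProduct_comm]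

/-- If the H∞ analysis LMI matrix
`M(P) = [[AᵀP + PA, PB, Cᵀ],[BᵀP, −γI, Dᵀ],[C, D, −γI]]` is negative definite (with `P`
symmetric, `γ > 0`), then for all `(x, w) ≠ (0, 0)` the dissipation inequality
`2 xᵀP(Ax + Bw) + γ⁻¹ ‖Cx + Dw‖² − γ ‖w‖² < 0` holds (`‖·‖` the Euclidean norm, squared
norms written as dot products). -/
theorem stmt_10 (n m r : ℕ) (γ : ℝ) (hγ : 0 < γ)
    (A : Matrix (Fin n) (Fin n) ℝ) (B : Matrix (Fin n) (Fin m) ℝ)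
    (C : Matrix (Fin r) (Fin n) ℝ) (D : Matrix (Fin r) (Fin m) ℝ)
    (P : Matrix (Fin n) (Fin n) ℝ) (hPsymm : Pᵀ = P)
    (hM : (fromBlocks
        (fromBlocks (Aᵀ * P + P * A) (P * B) (Bᵀ * P)
          (-(γ • (1 : Matrix (Fin m) (Fin m) ℝ))))
        (fromRows Cᵀ Dᵀ)
        (fromCols C D)
        (-(γ • (1 : Matrix (Fin r) (Fin r) ℝ)))).NegDefR) :
    ∀ (x : Fin n → ℝ) (w : Fin m → ℝ), ¬(x = 0 ∧ w = 0) →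
      2 * (x ⬝ᵥ P *ᵥ (A *ᵥ x + B *ᵥ w)) +
          γ⁻¹ * ((C *ᵥ x + D *ᵥ w) ⬝ᵥ (C *ᵥ x + D *ᵥ w)) -
          γ * (w ⬝ᵥ w) < 0 := by
  intro x w hxw
  set v : Fin r → ℝ := C *ᵥ x + D *ᵥ w with hv
  set z : Fin r → ℝ := γ⁻¹ • v with hz
  have hy : (Sum.elim (Sum.elim x w) z : Sum (Sum (Fin n) (Fin m)) (Fin r) → ℝ) ≠ 0 := by
    intro h
    apply hxw
    constructor
    · funext i; exact congrFun h (Sum.inl (Sum.inl i))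
    · funext j; exact congrFun h (Sum.inl (Sum.inr j))
  have key := hM _ hy
  simp only [fromBlocks_mulVec, Sum.elim_comp_inl, Sum.elim_comp_inr,
    fromRows_mulVec, fromCols_mulVec_sumElim, sumElim_dotProduct_sumElim,
    Matrix.add_mulVec, Matrix.neg_mulVec, Matrix.smul_mulVec, Matrix.one_mulVec,
    dotProduct_add, dotProduct_neg, dotProduct_smul, smul_eq_mul,
    ← Matrix.mulVec_mulVec] at key
  have e1 : x ⬝ᵥ Aᵀ *ᵥ (P *ᵥ x) = x ⬝ᵥ P *ᵥ (A *ᵥ x) := by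
    conv_lhs => rw [helper_dot_transpose, dotProduct_comm, ← hPsymm, helper_dot_transpose]
  have e2 : w ⬝ᵥ Bᵀ *ᵥ (P *ᵥ x) = x ⬝ᵥ P *ᵥ (B *ᵥ w) := by
    conv_lhs => rw [helper_dot_transpose, dotProduct_comm, ← hPsymm, helper_dot_transpose]
  have e3 : x ⬝ᵥ Cᵀ *ᵥ z = z ⬝ᵥ C *ᵥ x := helper_dot_transpose C x z
  have e4 : w ⬝ᵥ Dᵀ *ᵥ z = z ⬝ᵥ D *ᵥ w := helper_dot_transpose D w z
  have e5 : z ⬝ᵥ C *ᵥ x + z ⬝ᵥ D *ᵥ w = γ⁻¹ * (v ⬝ᵥ v) := by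
    rw [← dotProduct_add, hz, smul_dotProduct, hv, smul_eq_mul]
  have e6 : z ⬝ᵥ z = γ⁻¹ * (γ⁻¹ * (v ⬝ᵥ v)) := by
    rw [hz, smul_dotProduct, dotProduct_smul, smul_eq_mul, smul_eq_mul]
  have e7 : x ⬝ᵥ P *ᵥ (A *ᵥ x + B *ᵥ w) = x ⬝ᵥ P *ᵥ (A *ᵥ x) + x ⬝ᵥ P *ᵥ (B *ᵥ w) := by
    rw [Matrix.mulVec_add, dotProduct_add]
  have hγγ : γ * (γ⁻¹ * (γ⁻¹ * (v ⬝ᵥ v))) = γ⁻¹ * (v ⬝ᵥ v) := by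
    field_simp
  rw [e1, e2, e3, e4, e6] at key
  rw [e7]
  linarith [key, e5, hγγ]
end

section
/- Let γ > 0, let A ∈ ℝ^{n×n}, B ∈ ℝ^{n×m}, C ∈ ℝ^{r×n}, D ∈ ℝ^{r×m}, and let P be a symmetric positive definite n×n real matrix such that M(P) = [[AᵀP + PA, PB, Cᵀ],[BᵀP, −γI, Dᵀ],[C, D, −γI]] is negative definite. Let T > 0, let w : [0, T] → ℝᵐ be continuous, and let x : [0, T] → ℝⁿ be differentiable with x(0) = 0 and x′(t) = A x(t) + B w(t) for all t ∈ [0, T]. Then ∫₀ᵀ ‖C x(t) + D w(t)‖² dt ≤ γ² · ∫₀ᵀ ‖w(t)‖² dt, where ‖·‖ denotes the Euclidean norm. -/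
open Matrix

/-- A real matrix is positive definite (in the quadratic-form sense):
`yᵀ M y > 0` for all nonzero real vectors `y`. -/
def Matrix.PosDefR {ι : Type*} [Fintype ι] (M : Matrix ι ι ℝ) : Prop :=
  ∀ y : ι → ℝ, y ≠ 0 → 0 < y ⬝ᵥ M *ᵥ y

lemma contOn_dot {k : ℕ} {f g : ℝ → Fin k → ℝ} {s : Set ℝ}
    (hf : ContinuousOn f s) (hg : ContinuousOn g s) :
    ContinuousOn (fun t => f t ⬝ᵥ g t) s := by
  simp only [dotProduct]
  apply continuousOn_finset_sum
  intro i _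
  exact ((continuous_apply i).comp_continuousOn hf).mul
    ((continuous_apply i).comp_continuousOn hg)

lemma contOn_mulVec {k l : ℕ} (M : Matrix (Fin k) (Fin l) ℝ) {f : ℝ → Fin l → ℝ} {s : Set ℝ}
    (hf : ContinuousOn f s) : ContinuousOn (fun t => M *ᵥ f t) s := by
  apply continuousOn_pi.2
  intro i
  simp only [mulVec, dotProduct]
  apply continuousOn_finset_sum
  intro j _
  exact continuousOn_const.mul ((continuous_apply j).comp_continuousOn hf)

lemma hasDerivAt_quad {k : ℕ} (P : Matrix (Fin k) (Fin k) ℝ) {x : ℝ → Fin k → ℝ}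
    {x' : Fin k → ℝ} {t : ℝ} (h : HasDerivAt x x' t) :
    HasDerivAt (fun t => x t ⬝ᵥ P *ᵥ x t)
      (x' ⬝ᵥ P *ᵥ x t + x t ⬝ᵥ P *ᵥ x') t := by
  have hi : ∀ i, HasDerivAt (fun t => x t i) (x' i) t := hasDerivAt_pi.1 h
  have H : HasDerivAt (fun t => ∑ i, ∑ j, x t i * (P i j * x t j))
      (∑ i, ∑ j, (x' i * (P i j * x t j) + x t i * (P i j * x' j))) t := by
    apply HasDerivAt.fun_sum; intro i _
    apply HasDerivAt.fun_sum; intro j _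
    exact (hi i).mul ((hi j).const_mul (P i j))
  have e1 : (fun t => x t ⬝ᵥ P *ᵥ x t) = fun t => ∑ i, ∑ j, x t i * (P i j * x t j) := by
    funext t; simp [dotProduct, mulVec, Finset.mul_sum]
  have e2 : x' ⬝ᵥ P *ᵥ x t + x t ⬝ᵥ P *ᵥ x' =
      ∑ i, ∑ j, (x' i * (P i j * x t j) + x t i * (P i j * x' j)) := by
    simp [dotProduct, mulVec, Finset.mul_sum, Finset.sum_add_distrib]
  rw [e1, e2]; exact H

lemma lmi_key (n m r : ℕ) (γ : ℝ) (hγ : 0 < γ)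
    (A : Matrix (Fin n) (Fin n) ℝ) (B : Matrix (Fin n) (Fin m) ℝ)
    (C : Matrix (Fin r) (Fin n) ℝ) (D : Matrix (Fin r) (Fin m) ℝ)
    (P : Matrix (Fin n) (Fin n) ℝ)
    (hM : (fromBlocks
        (fromBlocks (Aᵀ * P + P * A) (P * B) (Bᵀ * P)
          (-(γ • (1 : Matrix (Fin m) (Fin m) ℝ))))
        (fromRows Cᵀ Dᵀ)
        (fromCols C D)
        (-(γ • (1 : Matrix (Fin r) (Fin r) ℝ)))).NegDefR)
    (u : Fin n → ℝ) (v : Fin m → ℝ) :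
    (A *ᵥ u + B *ᵥ v) ⬝ᵥ (P *ᵥ u) + u ⬝ᵥ (P *ᵥ (A *ᵥ u + B *ᵥ v))
      + γ⁻¹ * ((C *ᵥ u + D *ᵥ v) ⬝ᵥ (C *ᵥ u + D *ᵥ v)) ≤ γ * (v ⬝ᵥ v) := by
  set z0 := C *ᵥ u + D *ᵥ v with hz0
  by_cases h0 : u = 0 ∧ v = 0
  · obtain ⟨hu, hv⟩ := h0; subst hu hv; simp [hz0]
  · set y : ((Fin n ⊕ Fin m) ⊕ Fin r) → ℝ :=
      Sum.elim (Sum.elim u v) (γ⁻¹ • z0) with hy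
    have hyne : y ≠ 0 := by
      intro hc
      apply h0
      constructor
      · funext i; exact congr_fun hc (Sum.inl (Sum.inl i))
      · funext i; exact congr_fun hc (Sum.inl (Sum.inr i))
    have hq := hM y hyne
    rw [hy] at hq
    simp only [fromBlocks_mulVec, fromRows_mulVec, fromCols_mulVec_sumElim,
      sumElim_dotProduct_sumElim, mulVec_add, add_mulVec, dotProduct_add,
      add_dotProduct, neg_mulVec, smul_mulVec, one_mulVec, mulVec_smul,
      dotProduct_smul, smul_dotProduct, dotProduct_neg, neg_dotProduct,
      smul_eq_mul, Sum.elim_comp_inl, Sum.elim_comp_inr, ← mulVec_mulVec] at hq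
    have hγ' : γ ≠ 0 := ne_of_gt hγ
    have e1 : u ⬝ᵥ Aᵀ *ᵥ (P *ᵥ u) = (A *ᵥ u) ⬝ᵥ (P *ᵥ u) := by
      rw [dotProduct_mulVec, vecMul_transpose]
    have e2 : v ⬝ᵥ Bᵀ *ᵥ (P *ᵥ u) = (B *ᵥ v) ⬝ᵥ (P *ᵥ u) := by
      rw [dotProduct_mulVec, vecMul_transpose]
    have e3 : u ⬝ᵥ Cᵀ *ᵥ z0 = z0 ⬝ᵥ C *ᵥ u := by
      rw [dotProduct_mulVec, vecMul_transpose, dotProduct_comm]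
    have e4 : v ⬝ᵥ Dᵀ *ᵥ z0 = z0 ⬝ᵥ D *ᵥ v := by
      rw [dotProduct_mulVec, vecMul_transpose, dotProduct_comm]
    have e5 : z0 ⬝ᵥ C *ᵥ u + z0 ⬝ᵥ D *ᵥ v = z0 ⬝ᵥ z0 := by
      rw [hz0]; simp [dotProduct_add]
    have e6 : γ⁻¹ * -(γ * (γ⁻¹ * z0 ⬝ᵥ z0)) = -(γ⁻¹ * (z0 ⬝ᵥ z0)) := by
      field_simp
    have e5' : γ⁻¹ * (z0 ⬝ᵥ C *ᵥ u) + γ⁻¹ * (z0 ⬝ᵥ D *ᵥ v) = γ⁻¹ * (z0 ⬝ᵥ z0) := by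
      rw [← mul_add, e5]
    rw [e1, e2, e3, e4, e6, e5] at hq
    simp only [add_dotProduct, dotProduct_add, mulVec_add]
    linarith [hq, e5']

/-- If `P` is symmetric positive definite and the H∞ analysis LMI matrix
`M(P) = [[AᵀP + PA, PB, Cᵀ],[BᵀP, −γI, Dᵀ],[C, D, −γI]]` is negative definite, then every
trajectory of `ẋ = Ax + Bw` on `[0, T]` with continuous input `w` and `x(0) = 0` satisfies
the finite-horizon L₂-gain bound `∫₀ᵀ ‖Cx + Dw‖² dt ≤ γ² ∫₀ᵀ ‖w‖² dt` (squared Euclidean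
norms written as dot products). -/
theorem stmt_11 (n m r : ℕ) (γ : ℝ) (hγ : 0 < γ)
    (A : Matrix (Fin n) (Fin n) ℝ) (B : Matrix (Fin n) (Fin m) ℝ)
    (C : Matrix (Fin r) (Fin n) ℝ) (D : Matrix (Fin r) (Fin m) ℝ)
    (P : Matrix (Fin n) (Fin n) ℝ) (hPsymm : Pᵀ = P) (hPpd : P.PosDefR)
    (hM : (fromBlocks
        (fromBlocks (Aᵀ * P + P * A) (P * B) (Bᵀ * P)
          (-(γ • (1 : Matrix (Fin m) (Fin m) ℝ))))
        (fromRows Cᵀ Dᵀ)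
        (fromCols C D)
        (-(γ • (1 : Matrix (Fin r) (Fin r) ℝ)))).NegDefR)
    (T : ℝ) (hT : 0 < T)
    (w : ℝ → Fin m → ℝ) (hw : ContinuousOn w (Set.Icc 0 T))
    (x : ℝ → Fin n → ℝ) (hx0 : x 0 = 0)
    (hx : ∀ t ∈ Set.Icc (0 : ℝ) T, HasDerivAt x (A *ᵥ x t + B *ᵥ w t) t) :
    ∫ t in (0 : ℝ)..T, ((C *ᵥ x t + D *ᵥ w t) ⬝ᵥ (C *ᵥ x t + D *ᵥ w t)) ≤
      γ ^ 2 * ∫ t in (0 : ℝ)..T, (w t ⬝ᵥ w t) := by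
  have hγ' : γ ≠ 0 := ne_of_gt hγ
  have hTle : (0 : ℝ) ≤ T := hT.le
  have huIcc : Set.uIcc (0 : ℝ) T = Set.Icc 0 T := Set.uIcc_of_le hTle
  -- continuity of x on [0,T]
  have hxc : ContinuousOn x (Set.Icc 0 T) := fun t ht =>
    (hx t ht).continuousAt.continuousWithinAt
  set V' : ℝ → ℝ := fun t =>
    (A *ᵥ x t + B *ᵥ w t) ⬝ᵥ (P *ᵥ x t) + x t ⬝ᵥ (P *ᵥ (A *ᵥ x t + B *ᵥ w t)) with hV'
  have hAxBw : ContinuousOn (fun t => A *ᵥ x t + B *ᵥ w t) (Set.Icc 0 T) :=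
    (contOn_mulVec A hxc).add (contOn_mulVec B hw)
  have hV'c : ContinuousOn V' (Set.Icc 0 T) :=
    (contOn_dot hAxBw (contOn_mulVec P hxc)).add
      (contOn_dot hxc (contOn_mulVec P hAxBw))
  have hzc : ContinuousOn (fun t => (C *ᵥ x t + D *ᵥ w t) ⬝ᵥ (C *ᵥ x t + D *ᵥ w t))
      (Set.Icc 0 T) :=
    contOn_dot ((contOn_mulVec C hxc).add (contOn_mulVec D hw))
      ((contOn_mulVec C hxc).add (contOn_mulVec D hw))
  have hwc : ContinuousOn (fun t => w t ⬝ᵥ w t) (Set.Icc 0 T) := contOn_dot hw hw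
  -- FTC
  have hderiv : ∀ t ∈ Set.uIcc (0 : ℝ) T,
      HasDerivAt (fun t => x t ⬝ᵥ P *ᵥ x t) (V' t) t := by
    intro t ht
    rw [huIcc] at ht
    exact hasDerivAt_quad P (hx t ht)
  have hV'int : IntervalIntegrable V' MeasureTheory.volume 0 T :=
    (hV'c.mono (by rw [huIcc])).intervalIntegrable
  have hFTC : ∫ t in (0 : ℝ)..T, V' t = x T ⬝ᵥ P *ᵥ x T - x 0 ⬝ᵥ P *ᵥ x 0 :=
    intervalIntegral.integral_eq_sub_of_hasDerivAt hderiv hV'int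
  have hVT : 0 ≤ x T ⬝ᵥ P *ᵥ x T := by
    by_cases h : x T = 0
    · simp [h]
    · exact (hPpd (x T) h).le
  have hintV' : 0 ≤ ∫ t in (0 : ℝ)..T, V' t := by
    rw [hFTC, hx0]; simpa using hVT
  -- pointwise bound
  have hpt : ∀ t ∈ Set.Icc (0 : ℝ) T,
      V' t ≤ γ * (w t ⬝ᵥ w t)
        - γ⁻¹ * ((C *ᵥ x t + D *ᵥ w t) ⬝ᵥ (C *ᵥ x t + D *ᵥ w t)) := by
    intro t ht
    have := lmi_key n m r γ hγ A B C D P hM (x t) (w t)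
    linarith
  -- integral comparison
  have hgc : ContinuousOn (fun t => γ * (w t ⬝ᵥ w t)
      - γ⁻¹ * ((C *ᵥ x t + D *ᵥ w t) ⬝ᵥ (C *ᵥ x t + D *ᵥ w t))) (Set.Icc 0 T) :=
    (continuousOn_const.mul hwc).sub (continuousOn_const.mul hzc)
  have hgint : IntervalIntegrable (fun t => γ * (w t ⬝ᵥ w t)
      - γ⁻¹ * ((C *ᵥ x t + D *ᵥ w t) ⬝ᵥ (C *ᵥ x t + D *ᵥ w t)))
      MeasureTheory.volume 0 T := (hgc.mono (by rw [huIcc])).intervalIntegrable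
  have hmono : ∫ t in (0 : ℝ)..T, V' t ≤
      ∫ t in (0 : ℝ)..T, (γ * (w t ⬝ᵥ w t)
        - γ⁻¹ * ((C *ᵥ x t + D *ᵥ w t) ⬝ᵥ (C *ᵥ x t + D *ᵥ w t))) :=
    intervalIntegral.integral_mono_on hTle hV'int hgint hpt
  have hwint : IntervalIntegrable (fun t => w t ⬝ᵥ w t) MeasureTheory.volume 0 T :=
    (hwc.mono (by rw [huIcc])).intervalIntegrable
  have hzint : IntervalIntegrable
      (fun t => (C *ᵥ x t + D *ᵥ w t) ⬝ᵥ (C *ᵥ x t + D *ᵥ w t))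
      MeasureTheory.volume 0 T := (hzc.mono (by rw [huIcc])).intervalIntegrable
  have hsplit : ∫ t in (0 : ℝ)..T, (γ * (w t ⬝ᵥ w t)
        - γ⁻¹ * ((C *ᵥ x t + D *ᵥ w t) ⬝ᵥ (C *ᵥ x t + D *ᵥ w t))) =
      γ * (∫ t in (0 : ℝ)..T, (w t ⬝ᵥ w t))
        - γ⁻¹ * (∫ t in (0 : ℝ)..T, ((C *ᵥ x t + D *ᵥ w t) ⬝ᵥ (C *ᵥ x t + D *ᵥ w t))) := by
    rw [intervalIntegral.integral_sub (hwint.const_mul γ) (hzint.const_mul γ⁻¹),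
      intervalIntegral.integral_const_mul, intervalIntegral.integral_const_mul]
  set Iz := ∫ t in (0 : ℝ)..T, ((C *ᵥ x t + D *ᵥ w t) ⬝ᵥ (C *ᵥ x t + D *ᵥ w t))
  set Iw := ∫ t in (0 : ℝ)..T, (w t ⬝ᵥ w t)
  have h1 : 0 ≤ γ * Iw - γ⁻¹ * Iz := by
    rw [← hsplit]; linarith
  have h2 : γ⁻¹ * Iz ≤ γ * Iw := by linarith
  have h3 := mul_le_mul_of_nonneg_left h2 hγ.le
  calc Iz = γ * (γ⁻¹ * Iz) := by field_simp
    _ ≤ γ * (γ * Iw) := h3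
    _ = γ ^ 2 * Iw := by ring
end
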